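/- Let H = {x ∈ ℝⁿ : ⟨α, x⟩ = 0 for some α ∈ A} be a finite real hyperplane arrangement with A a finite set of nonzero vectors. Let ℍ = {r e^{iπφ} : r > 0, 0 < φ ≤ 1} ⊆ ℂ be the semi-closed upper half-plane, and ℍ₊ = {∑ a_j e_j : a_j ∈ ℍ} ⊆ ℂⁿ. Suppose φ : ℝⁿ → ℝⁿ is an invertible linear map (extended ℂ-linearly to ℂⁿ) such that the image of the positive orthant C₊ = {∑ θ_j e_j : θ_j > 0} under φ is a chamber of H (a connected component of ℝⁿ \ H). Then φ(ℍ₊) ⊆ ℂⁿ \ H_ℂ, where H_ℂ = ⋃_{α ∈ A} {z ∈ ℂⁿ : ⟨α, z⟩ = 0}. -/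
import Mathlib


/-- If an invertible linear map `φ` (defined over `ℝ`, extended `ℂ`-linearly) sends
the positive orthant onto a chamber of a real hyperplane arrangement, then `φ`
sends the region `ℍ₊` (coordinatewise semi-closed upper half-plane) into the
complexified complement of the arrangement. -/
theorem chamber_image_avoids_complexified_hyperplanes (n : ℕ) (hn : 1 ≤ n)
    (A : Finset (Fin n → ℝ)) (hA : ∀ α ∈ A, α ≠ 0)
    (φC : (Fin n → ℂ) ≃ₗ[ℂ] (Fin n → ℂ))
    (φR : (Fin n → ℝ) ≃ₗ[ℝ] (Fin n → ℝ))
    (hcompat : ∀ x : Fin n → ℝ, φC (fun j => (x j : ℂ)) = fun j => (φR x j : ℂ))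
    -- the image of the positive orthant under `φR` is a chamber, i.e. a connected
    -- component of the complement of the arrangement
    (hchamber : ∃ x₀ ∈ φR '' {x : Fin n → ℝ | ∀ j, 0 < x j},
      φR '' {x : Fin n → ℝ | ∀ j, 0 < x j} =
        connectedComponentIn {x : Fin n → ℝ | ∀ α ∈ A, ∑ j, α j * x j ≠ 0} x₀) :
    ∀ z : Fin n → ℂ,
      (∀ j, 0 < (z j).im ∨ ((z j).im = 0 ∧ (z j).re < 0)) →
      ∀ α ∈ A, ∑ j, (α j : ℂ) * φC z j ≠ 0 := by
  obtain ⟨x₀, hx₀, hch⟩ := hchamber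
  have hsub : φR '' {x : Fin n → ℝ | ∀ j, 0 < x j} ⊆
      {x : Fin n → ℝ | ∀ α ∈ A, ∑ j, α j * x j ≠ 0} := by
    rw [hch]; exact connectedComponentIn_subset _ _
  intro z hz α hα h0
  set x : Fin n → ℝ := fun j => (z j).re with hx
  set y : Fin n → ℝ := fun j => (z j).im with hy
  have hz' : z = (fun j => (x j : ℂ)) + Complex.I • (fun j => (y j : ℂ)) := by
    funext j
    simp only [Pi.add_apply, Pi.smul_apply, smul_eq_mul, hx, hy]
    rw [mul_comm]
    exact (Complex.re_add_im (z j)).symm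
  have hφz : ∀ j, φC z j = (φR x j : ℂ) + Complex.I * (φR y j : ℂ) := by
    intro j
    rw [hz', map_add, map_smul, hcompat, hcompat]
    simp
  have hre : (∑ j, (α j : ℂ) * φC z j).re = ∑ j, α j * φR x j := by
    rw [Complex.re_sum]
    refine Finset.sum_congr rfl fun j _ => ?_
    rw [hφz j]; simp
  have him : (∑ j, (α j : ℂ) * φC z j).im = ∑ j, α j * φR y j := by
    rw [Complex.im_sum]
    refine Finset.sum_congr rfl fun j _ => ?_
    rw [hφz j]; simp
  have hxz : (∑ j, α j * φR x j) = 0 := by rw [← hre, h0]; simp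
  have hyz : (∑ j, α j * φR y j) = 0 := by rw [← him, h0]; simp
  -- find small t > 0 with y - t • x in the open orthant
  have hev : ∀ᶠ t in nhdsWithin (0 : ℝ) (Set.Ioi 0), ∀ j, 0 < y j - t * x j := by
    rw [Filter.eventually_all]
    intro j
    rcases hz j with h | ⟨h1, h2⟩
    · have hc : Filter.Tendsto (fun t : ℝ => y j - t * x j)
          (nhdsWithin (0 : ℝ) (Set.Ioi 0)) (nhds (y j)) := by
        have : Filter.Tendsto (fun t : ℝ => y j - t * x j) (nhds 0) (nhds (y j - 0 * x j)) :=
          (continuous_const.sub (continuous_id.mul continuous_const)).tendsto 0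
        simpa using this.mono_left nhdsWithin_le_nhds
      exact hc.eventually (eventually_gt_nhds h)
    · filter_upwards [self_mem_nhdsWithin] with t ht
      have ht' : (0 : ℝ) < t := ht
      have : y j = 0 := h1
      nlinarith
  obtain ⟨t, ht⟩ := hev.exists
  have hmem : φR (fun j => y j - t * x j) ∈ φR '' {x : Fin n → ℝ | ∀ j, 0 < x j} :=
    ⟨_, ht, rfl⟩
  have hne := hsub hmem α hα
  apply hne
  have : φR (fun j => y j - t * x j) = fun j => φR y j - t * φR x j := by
    have : (fun j => y j - t * x j) = y - t • x := by funext j; simp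
    rw [this, map_sub, map_smul]
    funext j; simp
  rw [this]
  simp only [mul_sub]
  rw [Finset.sum_sub_distrib, hyz]
  have : ∑ j, α j * (t * φR x j) = t * ∑ j, α j * φR x j := by
    rw [Finset.mul_sum]; exact Finset.sum_congr rfl fun j _ => by ring
  rw [this, hxz]; ring
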